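/- For t > 0 and x, y ∈ (−2,2) define L_t(x,y) := ∑_{n=1}^{∞} e^{−tn/2}·T_n(x/2)·T_n(y/2)/n and M_t(x,y) := ∑_{n=1}^{∞} e^{−tn/2}·(√(4−x²)/2)·(√(4−y²)/2)·U_{n−1}(x/2)·U_{n−1}(y/2)/n (both series converge absolutely). Then for every Υ ∈ (0,1) there exists a constant C > 1 such that for all x, y ∈ [−2+Υ, 2−Υ] and all t ∈ (0,1]: C^{−1}·(t²+(x−y)²)^{−1/4} ≤ exp(L_t(x,y)) ≤ C·(t²+(x−y)²)^{−1/4} and C^{−1}·(t²+(x−y)²)^{−1/4} ≤ exp(M_t(x,y)) ≤ C·(t²+(x−y)²)^{−1/4}; moreover, C can be chosen so that the upper bound for exp(M_t(x,y)) holds for all x, y ∈ (−2,2) and t ∈ (0,1]. Finally, for all t ≥ 1 and all x, y ∈ (−2,2): exp(L_t(x,y)) ≤ e and exp(M_t(x,y)) ≤ e. -/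

import Mathlib

open MeasureTheory Real Filter Set

noncomputable section

/-- Term of the series defining `L_t(x,y)`. -/
def Lterm (t x y : ℝ) (n : ℕ) : ℝ :=
  Real.exp (-t * (n + 1) / 2) *
    Polynomial.eval (x / 2) (Polynomial.Chebyshev.T ℝ ((n : ℤ) + 1)) *
    Polynomial.eval (y / 2) (Polynomial.Chebyshev.T ℝ ((n : ℤ) + 1)) / ((n : ℝ) + 1)

/-- Term of the series defining `M_t(x,y)`. -/
def Mterm (t x y : ℝ) (n : ℕ) : ℝ :=
  Real.exp (-t * (n + 1) / 2) *
    (Real.sqrt (4 - x ^ 2) / 2) * (Real.sqrt (4 - y ^ 2) / 2) *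
    Polynomial.eval (x / 2) (Polynomial.Chebyshev.U ℝ (n : ℤ)) *
    Polynomial.eval (y / 2) (Polynomial.Chebyshev.U ℝ (n : ℤ)) / ((n : ℝ) + 1)

/-- `L_t(x,y) = ∑_{n≥1} e^{-tn/2} T_n(x/2) T_n(y/2) / n`. -/
def Lfun (t x y : ℝ) : ℝ := ∑' n : ℕ, Lterm t x y n

/-- `M_t(x,y) = ∑_{n≥1} e^{-tn/2} (√(4−x²)/2)(√(4−y²)/2) U_{n−1}(x/2) U_{n−1}(y/2) / n`. -/
def Mfun (t x y : ℝ) : ℝ := ∑' n : ℕ, Mterm t x y n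

namespace SLS

/-! ### Elementary trigonometric and exponential estimates -/

def Ee (r θ : ℝ) : ℝ := 1 - 2 * r * Real.cos θ + r ^ 2

lemma Ee_eq (r θ : ℝ) : Ee r θ = (1 - r * Real.cos θ) ^ 2 + (r * Real.sin θ) ^ 2 := by
  have := Real.sin_sq_add_cos_sq θ
  unfold Ee; nlinarith [this]

lemma Ee_pos {r : ℝ} (hr0 : 0 ≤ r) (hr1 : r < 1) (θ : ℝ) : 0 < Ee r θ := by
  unfold Ee; nlinarith [Real.cos_le_one θ, Real.neg_one_le_cos θ, sq_nonneg (1 - r)]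

lemma cos_mul_cos (X Y : ℝ) :
    Real.cos X * Real.cos Y = (Real.cos (X - Y) + Real.cos (X + Y)) / 2 := by
  rw [Real.cos_sub, Real.cos_add]; ring

lemma sin_mul_sin (X Y : ℝ) :
    Real.sin X * Real.sin Y = (Real.cos (X - Y) - Real.cos (X + Y)) / 2 := by
  rw [Real.cos_sub, Real.cos_add]; ring

lemma one_sub_cos_eq (φ : ℝ) : 1 - Real.cos φ = 2 * Real.sin (φ / 2) ^ 2 := by
  have := Real.sin_sq_eq_half_sub (φ / 2)
  have h2 : 2 * (φ / 2) = φ := by ring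
  rw [h2] at this
  linarith

/-- Jordan-type lower bound for `sin u ^ 2`. -/
lemma sin_sq_ge {u : ℝ} (h : |u| ≤ π / 2) : u ^ 2 / 4 ≤ Real.sin u ^ 2 := by
  have hπ := Real.pi_pos
  have hπ4 := Real.pi_le_four
  rcases abs_le.1 h with ⟨h1, h2⟩
  have hπ16 : π ^ 2 ≤ 16 := by nlinarith
  have key : 4 * u ^ 2 ≤ π ^ 2 * Real.sin u ^ 2 := by
    rcases le_total 0 u with hu | hu
    · have hs := Real.mul_le_sin hu h2
      have h0 : 0 ≤ 2 / π * u := by positivity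
      have hb : 0 ≤ Real.sin u := le_trans h0 hs
      have hmul := mul_le_mul hs hs h0 hb
      have hπ2 : 2 / π * u * (2 / π * u) * π ^ 2 = 4 * u ^ 2 := by field_simp; ring
      nlinarith [mul_le_mul_of_nonneg_right hmul (sq_nonneg π)]
    · have hs := Real.mul_le_sin (neg_nonneg.2 hu) (by linarith)
      rw [Real.sin_neg] at hs
      have h0 : 0 ≤ 2 / π * -u := mul_nonneg (by positivity) (by linarith)
      have hb : 0 ≤ -Real.sin u := le_trans h0 hs
      have hmul := mul_le_mul hs hs h0 hb
      have hπ2 : 2 / π * -u * (2 / π * -u) * π ^ 2 = 4 * u ^ 2 := by field_simp; ring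
      nlinarith [mul_le_mul_of_nonneg_right hmul (sq_nonneg π)]
  nlinarith [key, hπ16, sq_nonneg (Real.sin u)]

lemma sin_lb {δ x : ℝ} (hδ : 0 < δ) (h1 : δ ≤ x) (h2 : x ≤ π - δ) : δ / 2 ≤ Real.sin x := by
  have hπ := Real.pi_pos
  have hπ4 := Real.pi_le_four
  have h12 : (1:ℝ) / 2 ≤ 2 / π := by
    rw [div_le_div_iff₀ (by norm_num) hπ]
    linarith
  have h24 : δ / 2 ≤ 2 / π * δ := by nlinarith
  rcases le_total x (π / 2) with hx | hx
  · refine h24.trans (le_trans ?_ (Real.mul_le_sin (by linarith : (0:ℝ) ≤ x) hx))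
    have h0 : (0:ℝ) ≤ 2 / π := by positivity
    exact mul_le_mul_of_nonneg_left h1 h0
  · rw [← Real.sin_pi_sub]
    refine h24.trans (le_trans ?_ (Real.mul_le_sin (by linarith : (0:ℝ) ≤ π - x) (by linarith)))
    have h0 : (0:ℝ) ≤ 2 / π := by positivity
    exact mul_le_mul_of_nonneg_left (by linarith) h0

lemma one_sub_cos_ge {θ : ℝ} (h : |θ| ≤ π) : θ ^ 2 / 8 ≤ 1 - Real.cos θ := by
  have hπ := Real.pi_pos
  have h2 : |θ / 2| ≤ π / 2 := by rw [abs_div, abs_two]; linarith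
  have := sin_sq_ge h2
  rw [one_sub_cos_eq]
  nlinarith

lemma one_sub_cos_le (θ : ℝ) : 1 - Real.cos θ ≤ θ ^ 2 / 2 := by
  nlinarith [Real.one_sub_sq_div_two_le_cos (x := θ)]

lemma arccos_mem_Ioo {u : ℝ} (h1 : -1 < u) (h2 : u < 1) : Real.arccos u ∈ Ioo 0 π := by
  refine ⟨Real.arccos_pos.2 h2, lt_of_le_of_ne (Real.arccos_le_pi u) ?_⟩
  intro h
  have := Real.arccos_eq_pi.1 h
  linarith

lemma sqrt_four_sub {α : ℝ} (hα : α ∈ Ioo 0 π) :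
    Real.sqrt (4 - (2 * Real.cos α) ^ 2) / 2 = Real.sin α := by
  have hs : 0 ≤ Real.sin α := (Real.sin_pos_of_pos_of_lt_pi hα.1 hα.2).le
  have h4 : 4 - (2 * Real.cos α) ^ 2 = (2 * Real.sin α) ^ 2 := by
    nlinarith [Real.sin_sq_add_cos_sq α]
  rw [h4, Real.sqrt_sq (by positivity)]
  ring

/-! ### Facts about `r = exp (-t/2)` -/

lemma exp_half_lt_two : Real.exp (1 / 2 : ℝ) < 2 := by
  have h1 := Real.exp_one_lt_d9
  have hh : Real.exp (1 / 2 : ℝ) * Real.exp (1 / 2 : ℝ) = Real.exp 1 := by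
    rw [← Real.exp_add]; norm_num
  nlinarith [Real.exp_pos (1 / 2 : ℝ)]

lemma exp_half_gt : (1.64 : ℝ) < Real.exp (1 / 2 : ℝ) := by
  have h1 := Real.exp_one_gt_d9
  have hh : Real.exp (1 / 2 : ℝ) * Real.exp (1 / 2 : ℝ) = Real.exp 1 := by
    rw [← Real.exp_add]; norm_num
  nlinarith [Real.exp_pos (1 / 2 : ℝ)]

lemma exp_neg_half_add_exp_neg_one_le : Real.exp (-(1:ℝ) / 2) + Real.exp (-(1:ℝ)) ≤ 1 := by
  have h1 := Real.exp_one_gt_d9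
  have h2 := exp_half_gt
  have e1 : Real.exp (-(1:ℝ)) * Real.exp (1:ℝ) = 1 := by rw [← Real.exp_add]; norm_num
  have e2 : Real.exp (-(1:ℝ) / 2) * Real.exp (1 / 2 : ℝ) = 1 := by
    rw [← Real.exp_add]; norm_num
  have p1 := Real.exp_pos (-(1:ℝ))
  have p2 := Real.exp_pos (-(1:ℝ) / 2)
  have b1 : Real.exp (-(1:ℝ)) ≤ 0.368 := by nlinarith
  have b2 : Real.exp (-(1:ℝ) / 2) ≤ 0.61 := by nlinarith
  linarith

lemma r_facts {t : ℝ} (ht0 : 0 < t) (ht1 : t ≤ 1) :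
    1 / 2 ≤ Real.exp (-t / 2) ∧ Real.exp (-t / 2) < 1 ∧
      1 - Real.exp (-t / 2) ≤ t / 2 ∧ t / 4 ≤ 1 - Real.exp (-t / 2) := by
  set r := Real.exp (-t / 2) with hrdef
  have hr0 : 0 < r := Real.exp_pos _
  have hr1 : r < 1 := by
    have : r < Real.exp 0 := Real.exp_lt_exp.2 (by linarith)
    rwa [Real.exp_zero] at this
  have hhalf : 1 / 2 ≤ r := by
    have hmono : Real.exp (-(1:ℝ) / 2) ≤ r := Real.exp_le_exp.2 (by linarith)
    have e2 : Real.exp (-(1:ℝ) / 2) * Real.exp (1 / 2 : ℝ) = 1 := by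
      rw [← Real.exp_add]; norm_num
    have h2 := exp_half_lt_two
    have p2 := Real.exp_pos (-(1:ℝ) / 2)
    nlinarith
  have hub : 1 - r ≤ t / 2 := by
    have := Real.add_one_le_exp (-t / 2)
    linarith
  have hlb : t / 4 ≤ 1 - r := by
    have h := Real.add_one_le_exp (t / 2)
    have e : Real.exp (t / 2) * r = 1 := by
      rw [hrdef, ← Real.exp_add, show t / 2 + -t / 2 = (0:ℝ) by ring, Real.exp_zero]
    nlinarith
  exact ⟨hhalf, hr1, hub, hlb⟩

/-! ### Series identities -/

lemma hasSum_cos_series {r : ℝ} (θ : ℝ) (hr0 : 0 ≤ r) (hr1 : r < 1) :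
    HasSum (fun n : ℕ => r ^ (n + 1) * Real.cos (((n : ℝ) + 1) * θ) / ((n : ℝ) + 1))
      (-(1 / 2) * Real.log (Ee r θ)) := by
  set z : ℂ := (r : ℂ) * Complex.exp (θ * Complex.I) with hzdef
  have hznorm : ‖z‖ < 1 := by
    rw [hzdef, norm_mul, Complex.norm_real, Real.norm_eq_abs,
      Complex.norm_exp_ofReal_mul_I, abs_of_nonneg hr0, mul_one]
    exact hr1
  have h := Complex.hasSum_taylorSeries_neg_log hznorm
  have hre := h.mapL Complex.reCLM
  have hterm : ∀ n : ℕ, Complex.reCLM (z ^ n / n) = r ^ n * Real.cos (n * θ) / n := by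
    intro n
    have hzn : z ^ n / n = ((r ^ n / n : ℝ) : ℂ) * Complex.exp ((n * θ : ℝ) * Complex.I) := by
      rw [hzdef, mul_pow, ← Complex.exp_nat_mul, ← Complex.ofReal_pow]
      push_cast
      ring
    rw [Complex.reCLM_apply, hzn, Complex.re_ofReal_mul, Complex.exp_ofReal_mul_I_re]
    ring
  have hval : Complex.reCLM (-Complex.log (1 - z)) = -(1 / 2) * Real.log (Ee r θ) := by
    rw [Complex.reCLM_apply, Complex.neg_re, Complex.log_re]
    have habs : ‖1 - z‖ = Real.sqrt (Ee r θ) := by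
      rw [Complex.norm_def]
      congr 1
      rw [Complex.normSq_apply]
      have hre1 : (1 - z).re = 1 - r * Real.cos θ := by
        rw [hzdef, Complex.sub_re, Complex.re_ofReal_mul, Complex.exp_ofReal_mul_I_re]
        simp
      have him1 : (1 - z).im = -(r * Real.sin θ) := by
        rw [hzdef, Complex.sub_im, Complex.im_ofReal_mul, Complex.exp_ofReal_mul_I_im]
        simp
      rw [hre1, him1, Ee_eq]; ring
    rw [habs, Real.log_sqrt]
    · ring
    · rw [Ee_eq]; positivity
  rw [hval] at hre
  simp only [hterm] at hre
  have h2 := (hasSum_nat_add_iff' (f := fun n : ℕ => r ^ n * Real.cos (n * θ) / n) 1).2 hre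
  simp only [Finset.range_one, Finset.sum_singleton, Nat.cast_zero, pow_zero, zero_mul,
    Real.cos_zero, div_zero, sub_zero, mul_zero] at h2
  simpa only [Nat.cast_add, Nat.cast_one] using h2

lemma exp_pow (t : ℝ) (n : ℕ) :
    Real.exp (-t * (n + 1) / 2) = Real.exp (-t / 2) ^ (n + 1) := by
  rw [← Real.exp_nat_mul]
  congr 1
  push_cast
  ring

lemma Lterm_eq (t α β : ℝ) (n : ℕ) :
    Lterm t (2 * Real.cos α) (2 * Real.cos β) n =
      Real.exp (-t / 2) ^ (n + 1) * Real.cos (((n : ℝ) + 1) * α) *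
        Real.cos (((n : ℝ) + 1) * β) / ((n : ℝ) + 1) := by
  unfold Lterm
  rw [exp_pow]
  have h2 : ∀ γ : ℝ, 2 * Real.cos γ / 2 = Real.cos γ := fun γ => by ring
  rw [h2, h2]
  have hT : ∀ γ : ℝ, Polynomial.eval (Real.cos γ) (Polynomial.Chebyshev.T ℝ ((n : ℤ) + 1)) =
      Real.cos (((n : ℝ) + 1) * γ) := by
    intro γ
    rw [Polynomial.Chebyshev.T_real_cos]
    push_cast
    ring_nf
  rw [hT, hT]

lemma Mterm_eq (t α β : ℝ) (hα : α ∈ Ioo 0 π) (hβ : β ∈ Ioo 0 π) (n : ℕ) :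
    Mterm t (2 * Real.cos α) (2 * Real.cos β) n =
      Real.exp (-t / 2) ^ (n + 1) * Real.sin (((n : ℝ) + 1) * α) *
        Real.sin (((n : ℝ) + 1) * β) / ((n : ℝ) + 1) := by
  unfold Mterm
  rw [exp_pow, sqrt_four_sub hα, sqrt_four_sub hβ]
  have h2 : ∀ γ : ℝ, 2 * Real.cos γ / 2 = Real.cos γ := fun γ => by ring
  rw [h2, h2]
  have hU : ∀ γ : ℝ, Polynomial.eval (Real.cos γ) (Polynomial.Chebyshev.U ℝ (n : ℤ)) *
      Real.sin γ = Real.sin (((n : ℝ) + 1) * γ) := by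
    intro γ
    have := Polynomial.Chebyshev.U_real_cos γ (n : ℤ)
    rw [this]
    push_cast
    ring_nf
  calc Real.exp (-t / 2) ^ (n + 1) * Real.sin α * Real.sin β *
        Polynomial.eval (Real.cos α) (Polynomial.Chebyshev.U ℝ (n : ℤ)) *
        Polynomial.eval (Real.cos β) (Polynomial.Chebyshev.U ℝ (n : ℤ)) / ((n : ℝ) + 1)
      = Real.exp (-t / 2) ^ (n + 1) *
          (Polynomial.eval (Real.cos α) (Polynomial.Chebyshev.U ℝ (n : ℤ)) * Real.sin α) *
          (Polynomial.eval (Real.cos β) (Polynomial.Chebyshev.U ℝ (n : ℤ)) * Real.sin β) /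
            ((n : ℝ) + 1) := by ring
    _ = _ := by rw [hU, hU]

lemma hasSum_L {t : ℝ} (α β : ℝ) (ht : 0 < t) :
    HasSum (fun n : ℕ => Lterm t (2 * Real.cos α) (2 * Real.cos β) n)
      (-(1 / 4) * Real.log (Ee (Real.exp (-t / 2)) (α - β))
        - 1 / 4 * Real.log (Ee (Real.exp (-t / 2)) (α + β))) := by
  set r := Real.exp (-t / 2) with hrdef
  have hr0 : 0 ≤ r := (Real.exp_pos _).le
  have hr1 : r < 1 := by
    have : r < Real.exp 0 := Real.exp_lt_exp.2 (by linarith)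
    rwa [Real.exp_zero] at this
  have h1 := hasSum_cos_series (α - β) hr0 hr1
  have h2 := hasSum_cos_series (α + β) hr0 hr1
  have hfun : (fun n : ℕ => Lterm t (2 * Real.cos α) (2 * Real.cos β) n) =
      fun n : ℕ => 1 / 2 * (r ^ (n + 1) * Real.cos (((n : ℝ) + 1) * (α - β)) / ((n : ℝ) + 1)
        + r ^ (n + 1) * Real.cos (((n : ℝ) + 1) * (α + β)) / ((n : ℝ) + 1)) := by
    funext n
    rw [Lterm_eq, mul_sub ((n : ℝ) + 1) α β, mul_add ((n : ℝ) + 1) α β, Real.cos_sub, Real.cos_add]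
    ring
  rw [hfun]
  have hv : -(1 / 4) * Real.log (Ee r (α - β)) - 1 / 4 * Real.log (Ee r (α + β)) =
      1 / 2 * (-(1 / 2) * Real.log (Ee r (α - β)) + -(1 / 2) * Real.log (Ee r (α + β))) := by
    ring
  rw [hv]
  exact (h1.add h2).mul_left _

lemma hasSum_M {t : ℝ} {α β : ℝ} (ht : 0 < t) (hα : α ∈ Ioo 0 π) (hβ : β ∈ Ioo 0 π) :
    HasSum (fun n : ℕ => Mterm t (2 * Real.cos α) (2 * Real.cos β) n)
      (-(1 / 4) * Real.log (Ee (Real.exp (-t / 2)) (α - β))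
        + 1 / 4 * Real.log (Ee (Real.exp (-t / 2)) (α + β))) := by
  set r := Real.exp (-t / 2) with hrdef
  have hr0 : 0 ≤ r := (Real.exp_pos _).le
  have hr1 : r < 1 := by
    have : r < Real.exp 0 := Real.exp_lt_exp.2 (by linarith)
    rwa [Real.exp_zero] at this
  have h1 := hasSum_cos_series (α - β) hr0 hr1
  have h2 := hasSum_cos_series (α + β) hr0 hr1
  have hfun : (fun n : ℕ => Mterm t (2 * Real.cos α) (2 * Real.cos β) n) =
      fun n : ℕ => 1 / 2 * (r ^ (n + 1) * Real.cos (((n : ℝ) + 1) * (α - β)) / ((n : ℝ) + 1)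
        - r ^ (n + 1) * Real.cos (((n : ℝ) + 1) * (α + β)) / ((n : ℝ) + 1)) := by
    funext n
    rw [Mterm_eq t α β hα hβ, mul_sub ((n : ℝ) + 1) α β, mul_add ((n : ℝ) + 1) α β, Real.cos_sub, Real.cos_add]
    ring
  rw [hfun]
  have hv : -(1 / 4) * Real.log (Ee r (α - β)) + 1 / 4 * Real.log (Ee r (α + β)) =
      1 / 2 * (-(1 / 2) * Real.log (Ee r (α - β)) - -(1 / 2) * Real.log (Ee r (α + β))) := by
    ring
  rw [hv]
  exact (h1.sub h2).mul_left _

lemma expL_eq {t : ℝ} (α β : ℝ) (ht : 0 < t) :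
    Real.exp (Lfun t (2 * Real.cos α) (2 * Real.cos β)) =
      (Ee (Real.exp (-t / 2)) (α - β) * Ee (Real.exp (-t / 2)) (α + β)) ^ (-(1 / 4) : ℝ) := by
  set r := Real.exp (-t / 2) with hrdef
  have hr0 : 0 ≤ r := (Real.exp_pos _).le
  have hr1 : r < 1 := by
    have : r < Real.exp 0 := Real.exp_lt_exp.2 (by linarith)
    rwa [Real.exp_zero] at this
  have hA := Ee_pos hr0 hr1 (α - β)
  have hB := Ee_pos hr0 hr1 (α + β)
  rw [Lfun, (hasSum_L α β ht).tsum_eq, Real.rpow_def_of_pos (mul_pos hA hB),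
    Real.log_mul hA.ne' hB.ne']
  congr 1
  ring

lemma expM_eq {t : ℝ} {α β : ℝ} (ht : 0 < t) (hα : α ∈ Ioo 0 π) (hβ : β ∈ Ioo 0 π) :
    Real.exp (Mfun t (2 * Real.cos α) (2 * Real.cos β)) =
      (Ee (Real.exp (-t / 2)) (α - β) / Ee (Real.exp (-t / 2)) (α + β)) ^ (-(1 / 4) : ℝ) := by
  set r := Real.exp (-t / 2) with hrdef
  have hr0 : 0 ≤ r := (Real.exp_pos _).le
  have hr1 : r < 1 := by
    have : r < Real.exp 0 := Real.exp_lt_exp.2 (by linarith)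
    rwa [Real.exp_zero] at this
  have hA := Ee_pos hr0 hr1 (α - β)
  have hB := Ee_pos hr0 hr1 (α + β)
  rw [Mfun, (hasSum_M ht hα hβ).tsum_eq, Real.rpow_def_of_pos (div_pos hA hB),
    Real.log_div hA.ne' hB.ne']
  congr 1
  ring

/-! ### rpow comparison helpers -/

lemma rpow_up {S u c : ℝ} (hu : 0 < u) (hc : 0 < c) (hS : 0 < S) (h : S ≤ c * u) :
    u ^ (-(1 / 4) : ℝ) ≤ c ^ ((1 / 4) : ℝ) * S ^ (-(1 / 4) : ℝ) := by
  have h1 : S / c ≤ u := (div_le_iff₀ hc).2 (by linarith)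
  have h2 := Real.rpow_le_rpow_of_nonpos (by positivity : (0:ℝ) < S / c) h1
    (by norm_num : (-(1 / 4) : ℝ) ≤ 0)
  calc u ^ (-(1 / 4) : ℝ) ≤ (S / c) ^ (-(1 / 4) : ℝ) := h2
    _ = c ^ ((1 / 4) : ℝ) * S ^ (-(1 / 4) : ℝ) := by
        rw [Real.div_rpow hS.le hc.le, Real.rpow_neg hc.le, div_eq_mul_inv, inv_inv]
        ring

lemma rpow_down {S u c : ℝ} (hu : 0 < u) (hc : 0 < c) (hS : 0 < S) (h : u ≤ c * S) :
    c ^ (-(1 / 4) : ℝ) * S ^ (-(1 / 4) : ℝ) ≤ u ^ (-(1 / 4) : ℝ) := by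
  have h2 := Real.rpow_le_rpow_of_nonpos hu h (by norm_num : (-(1 / 4) : ℝ) ≤ 0)
  rwa [Real.mul_rpow hc.le hS.le] at h2

/-! ### Summability -/

lemma summ_aux {r : ℝ} (hr0 : 0 ≤ r) (hr1 : r < 1) (f : ℕ → ℝ)
    (hf : ∀ n, |f n| ≤ r ^ (n + 1)) : Summable fun n => |f n| := by
  apply Summable.of_nonneg_of_le (fun n => abs_nonneg _) hf
  have := (summable_geometric_of_lt_one hr0 hr1).mul_left r
  refine this.congr (fun n => ?_)
  rw [pow_succ']

end SLS

namespace SLS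

/-! ### The key kernel estimates -/

lemma cos_diff_sq_le (α β : ℝ) :
    (2 * Real.cos α - 2 * Real.cos β) ^ 2 ≤ 4 * (α - β) ^ 2 := by
  have hc := Real.cos_sub_cos α β
  have hsq : (Real.cos α - Real.cos β) ^ 2 =
      4 * (Real.sin ((α + β) / 2) ^ 2 * Real.sin ((α - β) / 2) ^ 2) := by rw [hc]; ring
  have h1 : Real.sin ((α + β) / 2) ^ 2 ≤ 1 := Real.sin_sq_le_one _
  have h2 : Real.sin ((α - β) / 2) ^ 2 ≤ ((α - β) / 2) ^ 2 := Real.sin_sq_le_sq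
  nlinarith [sq_nonneg (Real.sin ((α - β) / 2)), sq_nonneg (Real.sin ((α + β) / 2))]

lemma A_lower {t α β : ℝ} (ht0 : 0 < t) (ht1 : t ≤ 1) (hα : α ∈ Ioo 0 π) (hβ : β ∈ Ioo 0 π) :
    (t ^ 2 + (2 * Real.cos α - 2 * Real.cos β) ^ 2) / 64 ≤ Ee (Real.exp (-t / 2)) (α - β) := by
  obtain ⟨hhalf, hr1, hub, hlb⟩ := r_facts ht0 ht1
  set r := Real.exp (-t / 2)
  have hθ : |α - β| ≤ π := abs_le.2 ⟨by linarith [hα.1, hα.2, hβ.1, hβ.2],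
    by linarith [hα.1, hα.2, hβ.1, hβ.2]⟩
  have h18 := one_sub_cos_ge hθ
  have hxy := cos_diff_sq_le α β
  have e1 : (t / 4) ^ 2 ≤ (1 - r) ^ 2 := by nlinarith
  have e2 : (α - β) ^ 2 / 8 ≤ 2 * r * (1 - Real.cos (α - β)) := by
    nlinarith [Real.cos_le_one (α - β)]
  unfold Ee
  nlinarith [e1, e2, hxy]

lemma B_upper {r : ℝ} (hr0 : 0 ≤ r) (hr1 : r < 1) (φ : ℝ) : Ee r φ ≤ 4 := by
  unfold Ee; nlinarith [Real.neg_one_le_cos φ]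

lemma A_upper_bulk {t α β δ : ℝ} (ht0 : 0 < t) (ht1 : t ≤ 1) (hδ0 : 0 < δ)
    (hα1 : δ ≤ α) (hα2 : α ≤ π - δ) (hβ1 : δ ≤ β) (hβ2 : β ≤ π - δ) :
    Ee (Real.exp (-t / 2)) (α - β) ≤
      (1 + 4 / δ ^ 2) * (t ^ 2 + (2 * Real.cos α - 2 * Real.cos β) ^ 2) := by
  obtain ⟨hhalf, hr1, hub, hlb⟩ := r_facts ht0 ht1
  set r := Real.exp (-t / 2)
  have hr0 : (0:ℝ) ≤ r := by linarith
  have hπ := Real.pi_pos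
  have hAub : Ee r (α - β) ≤ t ^ 2 / 4 + (α - β) ^ 2 := by
    have h2 := one_sub_cos_le (α - β)
    have h3 : 0 ≤ 1 - Real.cos (α - β) := by nlinarith [Real.cos_le_one (α - β)]
    unfold Ee
    nlinarith [sq_nonneg (α - β)]
  have hθπ : |α - β| ≤ π := abs_le.2 ⟨by linarith, by linarith⟩
  have hθ2 : |(α - β) / 2| ≤ π / 2 := by rw [abs_div, abs_two]; linarith
  have hj := sin_sq_ge hθ2
  have hs := sin_lb hδ0 (show δ ≤ (α + β) / 2 by linarith) (show (α + β) / 2 ≤ π - δ by linarith)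
  have hσsq : δ ^ 2 / 4 ≤ Real.sin ((α + β) / 2) ^ 2 := by nlinarith
  have hxylow : δ ^ 2 * (α - β) ^ 2 ≤ 4 * (2 * Real.cos α - 2 * Real.cos β) ^ 2 := by
    have hc := Real.cos_sub_cos α β
    have hsq : (Real.cos α - Real.cos β) ^ 2 =
        4 * (Real.sin ((α + β) / 2) ^ 2 * Real.sin ((α - β) / 2) ^ 2) := by rw [hc]; ring
    nlinarith [hσsq, hj, sq_nonneg (α - β), sq_nonneg (Real.sin ((α - β) / 2)), sq_nonneg δ]
  have hδ2 : (0:ℝ) < δ ^ 2 := by positivity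
  have hstep : δ ^ 2 * Ee r (α - β) ≤
      δ ^ 2 * ((1 + 4 / δ ^ 2) * (t ^ 2 + (2 * Real.cos α - 2 * Real.cos β) ^ 2)) := by
    have hK : δ ^ 2 * ((1 + 4 / δ ^ 2) * (t ^ 2 + (2 * Real.cos α - 2 * Real.cos β) ^ 2)) =
        (δ ^ 2 + 4) * (t ^ 2 + (2 * Real.cos α - 2 * Real.cos β) ^ 2) := by
      field_simp
    rw [hK]
    linarith [mul_le_mul_of_nonneg_left hAub (sq_nonneg δ), hxylow, sq_nonneg t,
      sq_nonneg (2 * Real.cos α - 2 * Real.cos β), sq_nonneg (δ * t),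
      sq_nonneg (δ * (2 * Real.cos α - 2 * Real.cos β))]
  exact le_of_mul_le_mul_left hstep hδ2

lemma B_lower_bulk {t α β δ : ℝ} (ht0 : 0 < t) (ht1 : t ≤ 1) (hδ0 : 0 < δ)
    (hα1 : δ ≤ α) (hα2 : α ≤ π - δ) (hβ1 : δ ≤ β) (hβ2 : β ≤ π - δ) :
    δ ^ 2 / 2 ≤ Ee (Real.exp (-t / 2)) (α + β) := by
  obtain ⟨hhalf, hr1, hub, hlb⟩ := r_facts ht0 ht1
  set r := Real.exp (-t / 2)
  have hs := sin_lb hδ0 (show δ ≤ (α + β) / 2 by linarith) (show (α + β) / 2 ≤ π - δ by linarith)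
  have hσsq : δ ^ 2 / 4 ≤ Real.sin ((α + β) / 2) ^ 2 := by nlinarith
  have h1 : 1 - Real.cos (α + β) = 2 * Real.sin ((α + β) / 2) ^ 2 := one_sub_cos_eq _
  unfold Ee
  nlinarith [hσsq, sq_nonneg (1 - r)]

lemma arccos_le_arccos {u v : ℝ} (h : u ≤ v) : Real.arccos v ≤ Real.arccos u := by
  rw [Real.arccos_eq_pi_div_two_sub_arcsin, Real.arccos_eq_pi_div_two_sub_arcsin]
  have := Real.monotone_arcsin h
  linarith

lemma exists_angle {x : ℝ} (h1 : -2 < x) (h2 : x < 2) :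
    ∃ α, α ∈ Ioo 0 π ∧ x = 2 * Real.cos α :=
  ⟨Real.arccos (x / 2), arccos_mem_Ioo (by linarith) (by linarith),
    by rw [Real.cos_arccos (by linarith) (by linarith)]; ring⟩

lemma exists_angle_bulk {Υ x : ℝ} (hΥ0 : 0 < Υ) (hΥ1 : Υ < 1)
    (hx : x ∈ Icc (-2 + Υ) (2 - Υ)) :
    ∃ α, (Real.arccos (1 - Υ / 2) ≤ α ∧ α ≤ π - Real.arccos (1 - Υ / 2)) ∧
      α ∈ Ioo 0 π ∧ x = 2 * Real.cos α := by
  obtain ⟨h1, h2⟩ := hx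
  refine ⟨Real.arccos (x / 2), ⟨?_, ?_⟩, ?_, ?_⟩
  · exact arccos_le_arccos (by linarith)
  · have h := arccos_le_arccos (show -(1 - Υ / 2) ≤ x / 2 by linarith)
    rw [Real.arccos_neg] at h
    linarith
  · exact arccos_mem_Ioo (by linarith) (by linarith)
  · rw [Real.cos_arccos (by linarith) (by linarith)]; ring

end SLS

set_option maxHeartbeats 1000000 in
open SLS in
/-- Space-time logarithmic singularity of the covariance kernels. -/
theorem spacetime_log_singularity :
    -- absolute convergence of both series
    (∀ t : ℝ, 0 < t → ∀ x ∈ Set.Ioo (-2 : ℝ) 2, ∀ y ∈ Set.Ioo (-2 : ℝ) 2,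
      (Summable fun n : ℕ => |Lterm t x y n|) ∧ (Summable fun n : ℕ => |Mterm t x y n|)) ∧
    -- two-sided bounds in the bulk and the global upper bound for `M`
    (∀ Υ ∈ Set.Ioo (0 : ℝ) 1, ∃ C : ℝ, 1 < C ∧
      (∀ x ∈ Set.Icc (-2 + Υ) (2 - Υ), ∀ y ∈ Set.Icc (-2 + Υ) (2 - Υ),
        ∀ t ∈ Set.Ioc (0 : ℝ) 1,
          C⁻¹ * (t ^ 2 + (x - y) ^ 2) ^ (-(1 / 4 : ℝ)) ≤ Real.exp (Lfun t x y) ∧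
          Real.exp (Lfun t x y) ≤ C * (t ^ 2 + (x - y) ^ 2) ^ (-(1 / 4 : ℝ)) ∧
          C⁻¹ * (t ^ 2 + (x - y) ^ 2) ^ (-(1 / 4 : ℝ)) ≤ Real.exp (Mfun t x y) ∧
          Real.exp (Mfun t x y) ≤ C * (t ^ 2 + (x - y) ^ 2) ^ (-(1 / 4 : ℝ))) ∧
      (∀ x ∈ Set.Ioo (-2 : ℝ) 2, ∀ y ∈ Set.Ioo (-2 : ℝ) 2, ∀ t ∈ Set.Ioc (0 : ℝ) 1,
        Real.exp (Mfun t x y) ≤ C * (t ^ 2 + (x - y) ^ 2) ^ (-(1 / 4 : ℝ)))) ∧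
    -- long-time bounds
    (∀ t : ℝ, 1 ≤ t → ∀ x ∈ Set.Ioo (-2 : ℝ) 2, ∀ y ∈ Set.Ioo (-2 : ℝ) 2,
      Real.exp (Lfun t x y) ≤ Real.exp 1 ∧ Real.exp (Mfun t x y) ≤ Real.exp 1) := by
  refine ⟨?_, ?_, ?_⟩
  · -- ### Part 1 : summability
    rintro t ht x ⟨hx1, hx2⟩ y ⟨hy1, hy2⟩
    obtain ⟨α, hαI, hxα⟩ := SLS.exists_angle hx1 hx2
    obtain ⟨β, hβI, hyβ⟩ := SLS.exists_angle hy1 hy2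
    have hr0 : (0:ℝ) ≤ Real.exp (-t / 2) := (Real.exp_pos _).le
    have hr1 : Real.exp (-t / 2) < 1 := by
      have : Real.exp (-t / 2) < Real.exp 0 := Real.exp_lt_exp.2 (by linarith)
      rwa [Real.exp_zero] at this
    constructor
    · refine SLS.summ_aux hr0 hr1 _ (fun n => ?_)
      rw [hxα, hyβ, SLS.Lterm_eq]
      have hn : (0:ℝ) < (n:ℝ) + 1 := by positivity
      rw [abs_div, abs_mul, abs_mul, abs_pow, abs_of_nonneg hr0, abs_of_pos hn,
        div_le_iff₀ hn]
      have hab : |Real.cos (((n:ℝ) + 1) * α)| * |Real.cos (((n:ℝ) + 1) * β)| ≤ 1 :=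
        mul_le_one₀ (Real.abs_cos_le_one _) (abs_nonneg _) (Real.abs_cos_le_one _)
      nlinarith [pow_nonneg hr0 (n + 1), Nat.cast_nonneg (α := ℝ) n,
        abs_nonneg (Real.cos (((n:ℝ) + 1) * α)), abs_nonneg (Real.cos (((n:ℝ) + 1) * β))]
    · refine SLS.summ_aux hr0 hr1 _ (fun n => ?_)
      rw [hxα, hyβ, SLS.Mterm_eq t α β hαI hβI]
      have hn : (0:ℝ) < (n:ℝ) + 1 := by positivity
      rw [abs_div, abs_mul, abs_mul, abs_pow, abs_of_nonneg hr0, abs_of_pos hn,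
        div_le_iff₀ hn]
      have h1 : |Real.sin (((n:ℝ) + 1) * α)| ≤ 1 :=
        abs_le.2 ⟨Real.neg_one_le_sin _, Real.sin_le_one _⟩
      have h2 : |Real.sin (((n:ℝ) + 1) * β)| ≤ 1 :=
        abs_le.2 ⟨Real.neg_one_le_sin _, Real.sin_le_one _⟩
      have hab : |Real.sin (((n:ℝ) + 1) * α)| * |Real.sin (((n:ℝ) + 1) * β)| ≤ 1 :=
        mul_le_one₀ h1 (abs_nonneg _) h2
      nlinarith [pow_nonneg hr0 (n + 1), Nat.cast_nonneg (α := ℝ) n,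
        abs_nonneg (Real.sin (((n:ℝ) + 1) * α)), abs_nonneg (Real.sin (((n:ℝ) + 1) * β))]
  · -- ### Part 2 : two-sided bounds
    rintro Υ ⟨hΥ0, hΥ1⟩
    set δ := Real.arccos (1 - Υ / 2) with hδdef
    have hδ0 : 0 < δ := Real.arccos_pos.2 (by linarith)
    have hδ2 : (0:ℝ) < δ ^ 2 := by positivity
    set K : ℝ := 1 + 4 / δ ^ 2 with hKdef
    set b : ℝ := δ ^ 2 / 2 with hbdef
    have hb0 : 0 < b := by positivity
    have hK1 : (1:ℝ) ≤ K := by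
      have : (0:ℝ) ≤ 4 / δ ^ 2 := by positivity
      rw [hKdef]; linarith
    have hK0 : (0:ℝ) < K := by linarith
    set c₀ : ℝ := 256 + 64 / b + 4 * K + K / b with hc₀def
    have hKb0 : 0 < K / b := by positivity
    have h64b : 0 < 64 / b := by positivity
    have hc₀4 : (256:ℝ) ≤ c₀ := by rw [hc₀def]; linarith
    have hc₀0 : (0:ℝ) < c₀ := by linarith
    have h4K : 4 * K ≤ c₀ := by rw [hc₀def]; linarith
    have hKbc : K / b ≤ c₀ := by rw [hc₀def]; linarith
    have h64bc : 64 / b ≤ c₀ := by rw [hc₀def]; linarith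
    -- the global upper bound for M (used twice)
    have hMglobal : ∀ x ∈ Set.Ioo (-2 : ℝ) 2, ∀ y ∈ Set.Ioo (-2 : ℝ) 2,
        ∀ t ∈ Set.Ioc (0 : ℝ) 1, Real.exp (Mfun t x y) ≤
          c₀ ^ ((1/4 : ℝ)) * (t ^ 2 + (x - y) ^ 2) ^ (-(1 / 4 : ℝ)) := by
      rintro x ⟨hx1, hx2⟩ y ⟨hy1, hy2⟩ t ⟨ht0, ht1⟩
      obtain ⟨α, hαI, hxα⟩ := SLS.exists_angle hx1 hx2
      obtain ⟨β, hβI, hyβ⟩ := SLS.exists_angle hy1 hy2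
      obtain ⟨hhalf, hr1, hub, hlb⟩ := SLS.r_facts ht0 ht1
      have hr0 : (0:ℝ) ≤ Real.exp (-t / 2) := (Real.exp_pos _).le
      have hA := SLS.Ee_pos hr0 hr1 (α - β)
      have hB := SLS.Ee_pos hr0 hr1 (α + β)
      have hS0 : 0 < t ^ 2 + (x - y) ^ 2 := by
        have := pow_pos ht0 2
        nlinarith [sq_nonneg (x - y)]
      have hAlow : (t ^ 2 + (x - y) ^ 2) / 64 ≤ Ee (Real.exp (-t / 2)) (α - β) := by
        have := SLS.A_lower ht0 ht1 hαI hβI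
        rwa [← hxα, ← hyβ] at this
      have hBup := SLS.B_upper hr0 hr1 (α + β)
      have heM : Real.exp (Mfun t x y) =
          (Ee (Real.exp (-t / 2)) (α - β) / Ee (Real.exp (-t / 2)) (α + β)) ^ (-(1/4) : ℝ) := by
        rw [hxα, hyβ]; exact SLS.expM_eq ht0 hαI hβI
      have hSdiv : t ^ 2 + (x - y) ^ 2 ≤
          256 * (Ee (Real.exp (-t / 2)) (α - β) / Ee (Real.exp (-t / 2)) (α + β)) := by
        rw [mul_div_assoc', le_div_iff₀ hB]
        nlinarith [mul_le_mul_of_nonneg_left hBup hS0.le]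
      have h2 := SLS.rpow_up (div_pos hA hB) (by norm_num : (0:ℝ) < 256) hS0 hSdiv
      have h3 : ((256:ℝ)) ^ ((1/4 : ℝ)) ≤ c₀ ^ ((1/4 : ℝ)) :=
        Real.rpow_le_rpow (by norm_num) hc₀4 (by norm_num)
      calc Real.exp (Mfun t x y)
          = (Ee (Real.exp (-t / 2)) (α - β) / Ee (Real.exp (-t / 2)) (α + β)) ^ (-(1/4) : ℝ) :=
            heM
        _ ≤ (256:ℝ) ^ ((1/4 : ℝ)) * (t ^ 2 + (x - y) ^ 2) ^ (-(1/4) : ℝ) := h2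
        _ ≤ c₀ ^ ((1/4 : ℝ)) * (t ^ 2 + (x - y) ^ 2) ^ (-(1/4) : ℝ) :=
            mul_le_mul_of_nonneg_right h3 (Real.rpow_nonneg hS0.le _)
    refine ⟨c₀ ^ ((1/4 : ℝ)), ?_, ?_, hMglobal⟩
    · rw [Real.one_lt_rpow_iff_of_pos hc₀0]
      exact Or.inl ⟨by linarith, by norm_num⟩
    · rintro x hxIcc y hyIcc t ⟨ht0, ht1⟩
      obtain ⟨α, ⟨hα1, hα2⟩, hαI, hxα⟩ := SLS.exists_angle_bulk hΥ0 hΥ1 hxIcc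
      obtain ⟨β, ⟨hβ1, hβ2⟩, hβI, hyβ⟩ := SLS.exists_angle_bulk hΥ0 hΥ1 hyIcc
      rw [← hδdef] at hα1 hα2 hβ1 hβ2
      obtain ⟨hhalf, hr1, hub, hlb⟩ := SLS.r_facts ht0 ht1
      have hr0 : (0:ℝ) ≤ Real.exp (-t / 2) := (Real.exp_pos _).le
      have hA := SLS.Ee_pos hr0 hr1 (α - β)
      have hB := SLS.Ee_pos hr0 hr1 (α + β)
      have hS0 : 0 < t ^ 2 + (x - y) ^ 2 := by
        have := pow_pos ht0 2
        nlinarith [sq_nonneg (x - y)]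
      have hAlow : (t ^ 2 + (x - y) ^ 2) / 64 ≤ Ee (Real.exp (-t / 2)) (α - β) := by
        have := SLS.A_lower ht0 ht1 hαI hβI
        rwa [← hxα, ← hyβ] at this
      have hAup : Ee (Real.exp (-t / 2)) (α - β) ≤ K * (t ^ 2 + (x - y) ^ 2) := by
        have := SLS.A_upper_bulk ht0 ht1 hδ0 hα1 hα2 hβ1 hβ2
        rw [← hxα, ← hyβ, ← hKdef] at this
        exact this
      have hBup := SLS.B_upper hr0 hr1 (α + β)
      have hBlow : b ≤ Ee (Real.exp (-t / 2)) (α + β) := by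
        have := SLS.B_lower_bulk ht0 ht1 hδ0 hα1 hα2 hβ1 hβ2
        rwa [← hbdef] at this
      have heL : Real.exp (Lfun t x y) =
          (Ee (Real.exp (-t / 2)) (α - β) * Ee (Real.exp (-t / 2)) (α + β)) ^ (-(1/4) : ℝ) := by
        rw [hxα, hyβ]; exact SLS.expL_eq α β ht0
      have heM : Real.exp (Mfun t x y) =
          (Ee (Real.exp (-t / 2)) (α - β) / Ee (Real.exp (-t / 2)) (α + β)) ^ (-(1/4) : ℝ) := by
        rw [hxα, hyβ]; exact SLS.expM_eq ht0 hαI hβI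
      have hCinv : ∀ c : ℝ, 0 < c → c ≤ c₀ →
          (c₀ ^ ((1/4 : ℝ)))⁻¹ ≤ c ^ (-(1/4) : ℝ) := by
        intro c hc hcc
        rw [← Real.rpow_neg hc₀0.le]
        exact Real.rpow_le_rpow_of_nonpos hc hcc (by norm_num)
      have hSnn := Real.rpow_nonneg hS0.le (-(1/4) : ℝ)
      refine ⟨?_, ?_, ?_, ?_⟩
      · -- lower bound for exp L
        have hABup : Ee (Real.exp (-t / 2)) (α - β) * Ee (Real.exp (-t / 2)) (α + β) ≤
            (4 * K) * (t ^ 2 + (x - y) ^ 2) := by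
          have := mul_le_mul hAup hBup hB.le (mul_nonneg hK0.le hS0.le)
          nlinarith
        have hdn := SLS.rpow_down (mul_pos hA hB) (by positivity : (0:ℝ) < 4 * K) hS0 hABup
        calc (c₀ ^ ((1/4:ℝ)))⁻¹ * (t ^ 2 + (x - y) ^ 2) ^ (-(1/4) : ℝ)
            ≤ (4 * K) ^ (-(1/4) : ℝ) * (t ^ 2 + (x - y) ^ 2) ^ (-(1/4) : ℝ) :=
              mul_le_mul_of_nonneg_right (hCinv _ (by positivity) h4K) hSnn
          _ ≤ (Ee (Real.exp (-t / 2)) (α - β) * Ee (Real.exp (-t / 2)) (α + β)) ^ (-(1/4) : ℝ) :=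
              hdn
          _ = Real.exp (Lfun t x y) := heL.symm
      · -- upper bound for exp L
        have hSAB : t ^ 2 + (x - y) ^ 2 ≤
            (64 / b) * (Ee (Real.exp (-t / 2)) (α - β) * Ee (Real.exp (-t / 2)) (α + β)) := by
          rw [div_mul_eq_mul_div, le_div_iff₀ hb0]
          have := mul_le_mul (show t ^ 2 + (x - y) ^ 2 ≤ 64 * Ee (Real.exp (-t / 2)) (α - β) by
            linarith) hBlow hb0.le (by positivity)
          nlinarith
        have hupp := SLS.rpow_up (mul_pos hA hB) (by positivity) hS0 hSAB
        have hcle : ((64 / b : ℝ)) ^ ((1/4 : ℝ)) ≤ c₀ ^ ((1/4 : ℝ)) :=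
          Real.rpow_le_rpow (by positivity) h64bc (by norm_num)
        calc Real.exp (Lfun t x y)
            = (Ee (Real.exp (-t / 2)) (α - β) * Ee (Real.exp (-t / 2)) (α + β)) ^ (-(1/4) : ℝ) :=
              heL
          _ ≤ (64 / b) ^ ((1/4 : ℝ)) * (t ^ 2 + (x - y) ^ 2) ^ (-(1/4) : ℝ) := hupp
          _ ≤ c₀ ^ ((1/4 : ℝ)) * (t ^ 2 + (x - y) ^ 2) ^ (-(1/4) : ℝ) :=
              mul_le_mul_of_nonneg_right hcle hSnn
      · -- lower bound for exp M
        have hdivup : Ee (Real.exp (-t / 2)) (α - β) / Ee (Real.exp (-t / 2)) (α + β) ≤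
            (K / b) * (t ^ 2 + (x - y) ^ 2) := by
          rw [div_le_iff₀ hB]
          have e1 : (K / b) * (t ^ 2 + (x - y) ^ 2) * b = K * (t ^ 2 + (x - y) ^ 2) := by
            field_simp
          have e2 := mul_le_mul_of_nonneg_left hBlow
            (show (0:ℝ) ≤ (K / b) * (t ^ 2 + (x - y) ^ 2) by positivity)
          linarith [hAup, e1, e2]
        have hdn := SLS.rpow_down (div_pos hA hB) (by positivity : (0:ℝ) < K / b) hS0 hdivup
        calc (c₀ ^ ((1/4:ℝ)))⁻¹ * (t ^ 2 + (x - y) ^ 2) ^ (-(1/4) : ℝ)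
            ≤ (K / b) ^ (-(1/4) : ℝ) * (t ^ 2 + (x - y) ^ 2) ^ (-(1/4) : ℝ) :=
              mul_le_mul_of_nonneg_right (hCinv _ (by positivity) hKbc) hSnn
          _ ≤ (Ee (Real.exp (-t / 2)) (α - β) / Ee (Real.exp (-t / 2)) (α + β)) ^ (-(1/4) : ℝ) :=
              hdn
          _ = Real.exp (Mfun t x y) := heM.symm
      · -- upper bound for exp M : from the global statement
        exact hMglobal x ⟨by linarith [hxIcc.1, hxIcc.2], by linarith [hxIcc.1, hxIcc.2]⟩
          y ⟨by linarith [hyIcc.1, hyIcc.2], by linarith [hyIcc.1, hyIcc.2]⟩ t ⟨ht0, ht1⟩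
  · -- ### Part 3 : long-time bounds
    rintro t ht x ⟨hx1, hx2⟩ y ⟨hy1, hy2⟩
    have ht0 : 0 < t := by linarith
    obtain ⟨α, hαI, hxα⟩ := SLS.exists_angle hx1 hx2
    obtain ⟨β, hβI, hyβ⟩ := SLS.exists_angle hy1 hy2
    have hr0 : (0:ℝ) ≤ Real.exp (-t / 2) := (Real.exp_pos _).le
    have hr1 : Real.exp (-t / 2) < 1 := by
      have : Real.exp (-t / 2) < Real.exp 0 := Real.exp_lt_exp.2 (by linarith)
      rwa [Real.exp_zero] at this
    have hA := SLS.Ee_pos hr0 hr1 (α - β)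
    have hB := SLS.Ee_pos hr0 hr1 (α + β)
    have hrhalf : Real.exp (-t / 2) ≤ Real.exp (-(1:ℝ) / 2) := Real.exp_le_exp.2 (by linarith)
    have h1r : Real.exp (-(1:ℝ)) ≤ 1 - Real.exp (-t / 2) := by
      have := SLS.exp_neg_half_add_exp_neg_one_le
      linarith
    have hlog : ∀ φ : ℝ, -2 ≤ Real.log (Ee (Real.exp (-t / 2)) φ) := by
      intro φ
      have hEφ := SLS.Ee_pos hr0 hr1 φ
      have hsub : (1 - Real.exp (-t / 2)) ^ 2 ≤ Ee (Real.exp (-t / 2)) φ := by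
        unfold Ee
        nlinarith [Real.cos_le_one φ, hr0]
      have h1rpos : (0:ℝ) < 1 - Real.exp (-t / 2) := by linarith
      have h0 : (0:ℝ) < (1 - Real.exp (-t / 2)) ^ 2 := pow_pos h1rpos 2
      have l1 : Real.log ((1 - Real.exp (-t / 2)) ^ 2) ≤ Real.log (Ee (Real.exp (-t / 2)) φ) :=
        (Real.log_le_log_iff h0 hEφ).mpr hsub
      have l2 : Real.log ((1 - Real.exp (-t / 2)) ^ 2) = 2 * Real.log (1 - Real.exp (-t / 2)) := by
        rw [Real.log_pow]; norm_num
      have l3 : -1 ≤ Real.log (1 - Real.exp (-t / 2)) := by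
        have := (Real.log_le_log_iff (Real.exp_pos _) h1rpos).mpr h1r
        rwa [Real.log_exp] at this
      linarith
    have hlogB4 : Real.log (Ee (Real.exp (-t / 2)) (α + β)) ≤ 2 * Real.log 2 := by
      have hBup := SLS.B_upper hr0 hr1 (α + β)
      have : Real.log (Ee (Real.exp (-t / 2)) (α + β)) ≤ Real.log 4 :=
        (Real.log_le_log_iff hB (by norm_num)).mpr hBup
      have h4 : Real.log (4:ℝ) = 2 * Real.log 2 := by
        rw [show (4:ℝ) = 2 ^ 2 by norm_num, Real.log_pow]
        norm_num
      linarith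
    have hlog2 := Real.log_two_lt_d9
    constructor
    · rw [hxα, hyβ]
      have hLeq : Lfun t (2 * Real.cos α) (2 * Real.cos β) =
          -(1 / 4) * Real.log (Ee (Real.exp (-t / 2)) (α - β))
            - 1 / 4 * Real.log (Ee (Real.exp (-t / 2)) (α + β)) := by
        rw [Lfun]; exact (SLS.hasSum_L α β ht0).tsum_eq
      rw [hLeq]
      apply Real.exp_le_exp.2
      have := hlog (α - β)
      have := hlog (α + β)
      linarith
    · rw [hxα, hyβ]
      have hMeq : Mfun t (2 * Real.cos α) (2 * Real.cos β) =
          -(1 / 4) * Real.log (Ee (Real.exp (-t / 2)) (α - β))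
            + 1 / 4 * Real.log (Ee (Real.exp (-t / 2)) (α + β)) := by
        rw [Mfun]; exact (SLS.hasSum_M ht0 hαI hβI).tsum_eq
      rw [hMeq]
      apply Real.exp_le_exp.2
      have := hlog (α - β)
      linarith

end
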